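/- The online softmax recurrence is correct: if μ^(k) = max(μ^(k-1), s_k) with μ^(0) = -∞, and z^(k) = z^(k-1)·exp(μ^(k-1) - μ^(k)) + exp(s_k - μ^(k)) with z^(0) = 0, then after processing all K scores, z^(K) = Σ_{k=1}^{K} exp(s_k - μ^(K)) where μ^(K) = max_k s_k. -/
import Mathlib


open Finset

/-- Correctness of the online softmax recurrence: the running maximum equals the
maximum of the scores seen so far and the streaming normalizer equals the exact
(stabilized) softmax denominator. The base case `μ⁰ = -∞`, `z⁰ = 0` is treated
separately by the initialization at `k = 1`. -/
theorem online_softmax_normalizer_correct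
    (K : ℕ) (hK : 1 ≤ K) (s μ z : ℕ → ℝ)
    (hμ1 : μ 1 = s 1) (hz1 : z 1 = 1)
    (hμ : ∀ k, 1 ≤ k → μ (k + 1) = max (μ k) (s (k + 1)))
    (hz : ∀ k, 1 ≤ k →
      z (k + 1) = z k * Real.exp (μ k - μ (k + 1)) + Real.exp (s (k + 1) - μ (k + 1))) :
    μ K = (Finset.Icc 1 K).sup' (Finset.nonempty_Icc.mpr hK) s ∧
      z K = ∑ j ∈ Finset.Icc 1 K, Real.exp (s j - μ K) := by
  induction K, hK using Nat.le_induction with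
  | base =>
    constructor
    · simp [hμ1]
    · simp [hz1, hμ1]
  | succ K hK ih =>
    obtain ⟨ihμ, ihz⟩ := ih
    have hins : Finset.Icc 1 (K + 1) = insert (K + 1) (Finset.Icc 1 K) := by
      ext x; simp; omega
    have hnot : (K + 1) ∉ Finset.Icc 1 K := by simp
    have hμK : μ (K + 1) = max (μ K) (s (K + 1)) := hμ K hK
    constructor
    · simp only [hins, Finset.sup'_insert]
      rw [hμK, ihμ, max_comm, Finset.sup'_insert]
    · rw [hins, Finset.sum_insert hnot, hz K hK, ihz, Finset.sum_mul]
      rw [add_comm]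
      congr 1
      apply Finset.sum_congr rfl
      intro j _
      rw [← Real.exp_add]
      ring_nf
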